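/- arXiv:1509.01797 — 5 statements merged into one kernel-verified Lean document; each statement's English description precedes it below -/
import Mathlib

section
/- Let K be a compact convex body in ℝ^{2n} with 0 in its interior and smooth boundary, with gauge function g_K. Let γ : [0,T] → ∂K be a C¹ curve satisfying γ'(t) = J ∇g_K(γ(t)) for all t (where J is the standard complex structure on ℝ^{2n}) and γ(0) = γ(T). Then there exists t₀ ∈ [0,T] such that g_K(γ(t₀) − γ(0)) ≥ 1. -/
open scoped RealInnerProductSpace

noncomputable def Jsc (n : ℕ) (x : EuclideanSpace ℝ (Fin n ⊕ Fin n)) :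
    EuclideanSpace ℝ (Fin n ⊕ Fin n) :=
  WithLp.toLp 2 (fun i => Sum.elim (fun k => -x (Sum.inr k)) (fun k => x (Sum.inl k)) i)

def polarSet {E : Type*} [NormedAddCommGroup E] [InnerProductSpace ℝ E] (K : Set E) : Set E :=
  {y | ∀ x ∈ K, ⟪x, y⟫ ≤ 1}

lemma inner_Jsc {n : ℕ} (a b : EuclideanSpace ℝ (Fin n ⊕ Fin n)) :
    ⟪Jsc n a, Jsc n b⟫ = ⟪a, b⟫ := by
  simp [Jsc, PiLp.inner_apply, Fintype.sum_sum_type, RCLike.inner_apply, add_comm]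

-- gradient as HasFDerivAt
lemma grad_fderiv {E : Type*} [NormedAddCommGroup E] [InnerProductSpace ℝ E] [CompleteSpace E]
    {f : E → ℝ} {x : E} (hd : DifferentiableAt ℝ f x) :
    HasFDerivAt f (InnerProductSpace.toDual ℝ E (gradient f x)) x :=
  hasGradientAt_iff_hasFDerivAt.mp hd.hasGradientAt

-- Euler's identity for the gauge
lemma euler_gauge {E : Type*} [NormedAddCommGroup E] [InnerProductSpace ℝ E] [CompleteSpace E]
    {K : Set E} {x : E} (hd : DifferentiableAt ℝ (gauge K) x) :
    ⟪gradient (gauge K) x, x⟫ = gauge K x := by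
  have hg := grad_fderiv hd
  have hsm : HasDerivAt (fun s : ℝ => s • x) x 1 := by
    simpa using (hasDerivAt_id (1 : ℝ)).smul_const x
  have h1 : HasDerivAt (fun s : ℝ => gauge K (s • x))
      (InnerProductSpace.toDual ℝ E (gradient (gauge K) x) x) 1 := by
    have hg1 : HasFDerivAt (gauge K) (InnerProductSpace.toDual ℝ E (gradient (gauge K) x))
        ((1:ℝ) • x) := by simpa using hg
    have := hg1.comp_hasDerivAt 1 hsm
    exact this
  have h2 : HasDerivAt (fun s : ℝ => gauge K (s • x)) (gauge K x) 1 := by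
    have heq : (fun s : ℝ => s * gauge K x) =ᶠ[nhds (1 : ℝ)] fun s => gauge K (s • x) := by
      filter_upwards [Ioi_mem_nhds (show (0:ℝ) < 1 by norm_num)] with s hs
      rw [gauge_smul_of_nonneg (le_of_lt hs)]
      simp [smul_eq_mul]
    exact (hasDerivAt_mul_const (gauge K x)).congr_of_eventuallyEq heq.symm
  have := h1.unique h2
  rwa [InnerProductSpace.toDual_apply_apply] at this

-- subgradient inequality from subadditivity
lemma subgrad_gauge {E : Type*} [NormedAddCommGroup E] [InnerProductSpace ℝ E] [CompleteSpace E]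
    {K : Set E} (hKconv : Convex ℝ K) (habs : Absorbent ℝ K) {x : E}
    (hd : DifferentiableAt ℝ (gauge K) x) (z : E) :
    ⟪gradient (gauge K) x, z⟫ ≤ gauge K z := by
  have hg := grad_fderiv hd
  have hline : HasDerivAt (fun s : ℝ => gauge K (x + s • z))
      (InnerProductSpace.toDual ℝ E (gradient (gauge K) x) z) 0 := by
    have hsm : HasDerivAt (fun s : ℝ => x + s • z) z 0 := by
      simpa using (((hasDerivAt_id (0 : ℝ)).smul_const z).const_add x)
    have hg1 : HasFDerivAt (gauge K) (InnerProductSpace.toDual ℝ E (gradient (gauge K) x))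
        (x + (0:ℝ) • z) := by simpa using hg
    have := hg1.comp_hasDerivAt 0 hsm
    exact this
  rw [← InnerProductSpace.toDual_apply_apply (𝕜 := ℝ)]
  have htend := hasDerivAt_iff_tendsto_slope.mp hline
  have htend' : Filter.Tendsto (slope (fun s : ℝ => gauge K (x + s • z)) 0)
      (nhdsWithin 0 (Set.Ioi 0))
      (nhds (InnerProductSpace.toDual ℝ E (gradient (gauge K) x) z)) :=
    htend.mono_left (nhdsWithin_mono _ (fun s hs => ne_of_gt hs))
  refine le_of_tendsto htend' ?_
  filter_upwards [self_mem_nhdsWithin] with s hs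
  have hs' : (0:ℝ) < s := hs
  have hsub : gauge K (x + s • z) ≤ gauge K x + s * gauge K z := by
    calc gauge K (x + s • z) ≤ gauge K x + gauge K (s • z) := gauge_add_le hKconv habs _ _
    _ = gauge K x + s * gauge K z := by rw [gauge_smul_of_nonneg hs'.le]; simp [smul_eq_mul]
  rw [slope_def_field]
  have : (gauge K (x + s • z) - gauge K (x + (0:ℝ) • z)) / (s - 0) ≤ gauge K z := by
    rw [div_le_iff₀ (by simpa using hs')]
    simp only [zero_smul, add_zero, sub_zero]
    nlinarith [hsub]
  simpa [div_eq_inv_mul, slope] using this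

theorem stmt0 {n : ℕ} (K : Set (EuclideanSpace ℝ (Fin n ⊕ Fin n)))
    (hKc : IsCompact K) (hKconv : Convex ℝ K) (h0 : 0 ∈ interior K)
    (hsmooth : ∀ x : EuclideanSpace ℝ (Fin n ⊕ Fin n), x ≠ 0 → DifferentiableAt ℝ (gauge K) x)
    (T : ℝ) (hT : 0 < T) (γ : ℝ → EuclideanSpace ℝ (Fin n ⊕ Fin n))
    (hmem : ∀ t ∈ Set.Icc (0:ℝ) T, γ t ∈ frontier K)
    (hode : ∀ t ∈ Set.Icc (0:ℝ) T, HasDerivAt γ (Jsc n (gradient (gauge K) (γ t))) t)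
    (hclosed : γ 0 = γ T) :
    ∃ t₀ ∈ Set.Icc (0:ℝ) T, 1 ≤ gauge K (γ t₀ - γ 0) := by
  by_contra hcon
  push_neg at hcon
  have hK0 : K ∈ nhds (0 : EuclideanSpace ℝ (Fin n ⊕ Fin n)) :=
    mem_interior_iff_mem_nhds.mp h0
  have habs : Absorbent ℝ K := absorbent_nhds_zero hK0
  set ψ : ℝ → ℝ := fun t => ⟪Jsc n (γ 0), γ t⟫ with hψdef
  -- derivative of ψ
  have key : ∀ t ∈ Set.Icc (0:ℝ) T,
      HasDerivAt ψ (⟪γ 0, gradient (gauge K) (γ t)⟫) t ∧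
      0 < ⟪γ 0, gradient (gauge K) (γ t)⟫ := by
    intro t ht
    have hg1 : gauge K (γ t) = 1 :=
      (gauge_eq_one_iff_mem_frontier hKconv hK0).mpr (hmem t ht)
    have hγne : γ t ≠ 0 := by
      intro h; rw [h, gauge_zero] at hg1; norm_num at hg1
    have hd := hsmooth _ hγne
    set ν := gradient (gauge K) (γ t) with hν
    have hψ' : HasDerivAt ψ (⟪Jsc n (γ 0), Jsc n ν⟫) t := by
      have := (innerSL ℝ (Jsc n (γ 0))).hasFDerivAt.comp_hasDerivAt t (hode t ht)
      simpa [hψdef, Function.comp_def] using this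
    rw [inner_Jsc] at hψ'
    refine ⟨hψ', ?_⟩
    have heuler : ⟪ν, γ t⟫ = 1 := by rw [hν, euler_gauge hd, hg1]
    have hsubg : ⟪ν, γ t - γ 0⟫ ≤ gauge K (γ t - γ 0) :=
      subgrad_gauge hKconv habs hd _
    have hlt : gauge K (γ t - γ 0) < 1 := hcon t ht
    have : ⟪ν, γ 0⟫ = ⟪ν, γ t⟫ - ⟪ν, γ t - γ 0⟫ := by
      rw [inner_sub_right]; ring
    rw [real_inner_comm, this, heuler]
    linarith
  have hmono : StrictMonoOn ψ (Set.Icc 0 T) := by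
    apply strictMonoOn_of_deriv_pos (convex_Icc 0 T)
    · intro t ht
      exact ((key t ht).1.continuousAt).continuousWithinAt
    · intro t ht
      rw [interior_Icc] at ht
      have ht' : t ∈ Set.Icc (0:ℝ) T := Set.mem_Icc_of_Ioo ht
      rw [(key t ht').1.deriv]
      exact (key t ht').2
  have h01 : ψ 0 < ψ T :=
    hmono (Set.left_mem_Icc.mpr hT.le) (Set.right_mem_Icc.mpr hT.le) hT
  rw [hψdef] at h01
  simp only [hclosed] at h01
  exact lt_irrefl _ h01
end

section
/- Let K ⊂ ℝ² be a centrally symmetric compact convex body. Then the area of K is at most the product of the length of the orthogonal projection of K onto the x-axis and the length of the intersection of K with the y-axis, i.e., Vol₂(K) ≤ Vol₁(π_E(K)) · Vol₁(K ∩ E^⊥), where E is the x-axis. -/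
open MeasureTheory Set

theorem stmt3 (K : Set (ℝ × ℝ)) (hKc : IsCompact K) (hKconv : Convex ℝ K)
    (hint : (interior K).Nonempty) (hsym : K = -K) :
    MeasureTheory.volume K ≤
      MeasureTheory.volume (Prod.fst '' K) * MeasureTheory.volume {y : ℝ | ((0:ℝ), y) ∈ K} := by
  have hKm : MeasurableSet K := hKc.measurableSet
  set C := volume {y : ℝ | ((0:ℝ), y) ∈ K} with hCdef
  set S := Prod.fst '' K with hSdef
  have hSm : MeasurableSet S := (hKc.image continuous_fst).measurableSet
  have key : ∀ x : ℝ, volume {y : ℝ | (x, y) ∈ K} ≤ S.indicator (fun _ => C) x := by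
    intro x
    by_cases hx : x ∈ S
    · rw [Set.indicator_of_mem hx]
      set A : Set ℝ := {y | (x, y) ∈ K} with hAdef
      obtain ⟨p, hpK, hpx⟩ := hx
      have hAne : A.Nonempty :=
        ⟨p.2, show (x, p.2) ∈ K by rw [← hpx, Prod.mk.eta]; exact hpK⟩
      have hAconv : Convex ℝ A := by
        intro a ha b hb t s ht hs hts
        have h := hKconv (show (x, a) ∈ K from ha) (show (x, b) ∈ K from hb) ht hs hts
        have heq : t • ((x, a) : ℝ × ℝ) + s • ((x, b) : ℝ × ℝ) = (x, t • a + s • b) :=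
          Prod.ext (Convex.combo_self hts x) rfl
        rw [heq] at h
        exact h
      have hAeq' : A = Prod.snd '' (K ∩ {p : ℝ × ℝ | p.1 = x}) := by
        ext y
        constructor
        · intro hy; exact ⟨(x, y), ⟨hy, rfl⟩, rfl⟩
        · rintro ⟨q, ⟨hqK, hq1⟩, hq2⟩
          have : q = (x, y) := Prod.ext hq1 hq2
          rwa [this] at hqK
      have hAcomp : IsCompact A := by
        rw [hAeq']
        exact ((hKc.inter_right (isClosed_eq continuous_fst continuous_const)).image
          continuous_snd)
      obtain ⟨a, b, hab⟩ : ∃ a b : ℝ, A = Icc a b :=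
        ⟨sInf A, sSup A, eq_Icc_of_connected_compact ⟨hAne, hAconv.isPreconnected⟩ hAcomp⟩
      have hle : a ≤ b := by
        obtain ⟨y, hy⟩ := hAne
        rw [hab] at hy; exact le_trans hy.1 hy.2
      have hsub : Icc (-(b - a) / 2) ((b - a) / 2) ⊆ {y : ℝ | ((0:ℝ), y) ∈ K} := by
        intro y hy
        obtain ⟨hy1, hy2⟩ := hy
        have huA : y + (a + b) / 2 ∈ A := by
          rw [hab, Set.mem_Icc]; constructor <;> linarith
        have hvA : (a + b) / 2 - y ∈ A := by
          rw [hab, Set.mem_Icc]; constructor <;> linarith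
        have huK : (x, y + (a + b) / 2) ∈ K := huA
        have hvK : ((-x : ℝ), -((a + b) / 2 - y)) ∈ K := by
          rw [hsym, Set.mem_neg]
          simpa using (@id ((x, (a + b) / 2 - y) ∈ K) hvA)
        have hmid := hKconv huK hvK (by norm_num : (0:ℝ) ≤ 1/2)
          (by norm_num : (0:ℝ) ≤ 1/2) (by norm_num)
        have heq2 : ((1:ℝ)/2) • ((x, y + (a + b) / 2) : ℝ × ℝ)
            + ((1:ℝ)/2) • (((-x : ℝ), -((a + b) / 2 - y)) : ℝ × ℝ) = ((0:ℝ), y) := by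
          simp only [Prod.smul_mk, Prod.mk_add_mk, smul_eq_mul, Prod.mk.injEq]
          constructor <;> ring
        rwa [heq2] at hmid
      calc volume A = ENNReal.ofReal (b - a) := by rw [hab, Real.volume_Icc]
        _ = volume (Icc (-(b - a) / 2) ((b - a) / 2)) := by
            rw [Real.volume_Icc]; congr 1; ring
        _ ≤ C := measure_mono hsub
    · rw [Set.indicator_of_notMem hx]
      have : {y : ℝ | (x, y) ∈ K} = ∅ := by
        ext y; simp only [mem_setOf_eq, mem_empty_iff_false, iff_false]
        intro h; exact hx ⟨(x, y), h, rfl⟩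
      simp [this]
  calc volume K = ∫⁻ x, volume {y : ℝ | (x, y) ∈ K} := by
        rw [MeasureTheory.Measure.volume_eq_prod, Measure.prod_apply hKm]
        rfl
    _ ≤ ∫⁻ x, S.indicator (fun _ => C) x := lintegral_mono key
    _ = C * volume S := by rw [lintegral_indicator hSm _, setLIntegral_const]
    _ = volume S * C := mul_comm _ _
end

section
/- Let K ⊂ ℝ² be a centrally symmetric compact convex body, E the x-axis and E^⊥ the y-axis. Then Vol₁(π_E(K)) · Vol₁(K ∩ E^⊥) ≤ 2 · Vol₂(K). -/
open MeasureTheory Set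

theorem stmt4 (K : Set (ℝ × ℝ)) (hKc : IsCompact K) (hKconv : Convex ℝ K)
    (hint : (interior K).Nonempty) (hsym : K = -K) :
    MeasureTheory.volume (Prod.fst '' K) * MeasureTheory.volume {y : ℝ | ((0:ℝ), y) ∈ K} ≤
      2 * MeasureTheory.volume K := by
  have hneg : ∀ p : ℝ × ℝ, p ∈ K → -p ∈ K := by
    intro p hp
    rw [hsym]
    exact Set.neg_mem_neg.mpr hp
  -- 0 is in the interior
  have h0i : ((0:ℝ), (0:ℝ)) ∈ interior K := by
    obtain ⟨x, hx⟩ := hint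
    have hIn : interior (-K) = -interior K := by
      have := (Homeomorph.neg (ℝ × ℝ)).preimage_interior K
      simpa [Set.neg_preimage] using this.symm
    have hx' : -x ∈ interior K := by
      rw [hsym, hIn]; exact Set.neg_mem_neg.mpr hx
    have := (hKconv.interior) hx hx' (by norm_num : (0:ℝ) ≤ 1/2)
      (by norm_num : (0:ℝ) ≤ 1/2) (by norm_num)
    rw [show ((0:ℝ),(0:ℝ)) = (0 : ℝ × ℝ) from rfl]; simpa using this
  obtain ⟨ε, hε, hball⟩ := Metric.isOpen_iff.mp isOpen_interior _ h0i
  have hsub : Metric.ball ((0:ℝ),(0:ℝ)) ε ⊆ K := hball.trans interior_subset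
  have hx1 : ((ε/2 : ℝ), (0:ℝ)) ∈ K := by
    apply hsub
    rw [Metric.mem_ball, Prod.dist_eq]
    simp only [Real.dist_eq, sub_zero, abs_of_pos (half_pos hε), abs_zero]
    rw [max_eq_left (by positivity)]
    linarith
  have hy1 : ((0:ℝ), (ε/2 : ℝ)) ∈ K := by
    apply hsub
    rw [Metric.mem_ball, Prod.dist_eq]
    simp only [Real.dist_eq, sub_zero, abs_of_pos (half_pos hε), abs_zero]
    rw [max_eq_right (by positivity)]
    linarith
  set A : Set ℝ := Prod.fst '' K with hA
  set B : Set ℝ := {y : ℝ | ((0:ℝ), y) ∈ K} with hB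
  have hAc : IsCompact A := hKc.image continuous_fst
  have hAne : A.Nonempty := ⟨ε/2, ⟨_, hx1, rfl⟩⟩
  set a : ℝ := sSup A with ha
  have haA : a ∈ A := hAc.sSup_mem hAne
  have ha_pos : 0 < a := lt_of_lt_of_le (half_pos hε) (le_csSup hAc.bddAbove ⟨_, hx1, rfl⟩)
  obtain ⟨p₀, hp₀K, hp₀1⟩ := haA
  -- B compact
  have hBsub : B ⊆ Prod.snd '' K := fun y hy => ⟨_, hy, rfl⟩
  have hBc : IsCompact B :=
    (hKc.image continuous_snd).of_isClosed_subset
      (hKc.isClosed.preimage (by fun_prop : Continuous fun y : ℝ => ((0:ℝ), y))) hBsub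
  have hBne : B.Nonempty := ⟨ε/2, hy1⟩
  set b : ℝ := sSup B with hb
  have hbB : b ∈ B := hBc.sSup_mem hBne
  have hb_pos : 0 < b := lt_of_lt_of_le (half_pos hε) (le_csSup hBc.bddAbove hy1)
  have hbK : ((0:ℝ), b) ∈ K := hbB
  have hbK' : ((0:ℝ), -b) ∈ K := by simpa using hneg _ hbK
  -- projection and section bounds
  have hAIcc : A ⊆ Icc (-a) a := by
    rintro x ⟨p, hp, rfl⟩
    refine ⟨?_, le_csSup hAc.bddAbove ⟨p, hp, rfl⟩⟩
    have : -p.1 ≤ a := le_csSup hAc.bddAbove ⟨-p, hneg p hp, rfl⟩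
    linarith
  have hBIcc : B ⊆ Icc (-b) b := by
    intro y hy
    refine ⟨?_, le_csSup hBc.bddAbove hy⟩
    have h' : -y ∈ B := by show ((0:ℝ), -y) ∈ K; simpa using hneg _ hy
    have : -y ≤ b := le_csSup hBc.bddAbove h'
    linarith
  have volA : volume A ≤ ENNReal.ofReal (2*a) := by
    calc volume A ≤ volume (Icc (-a) a) := measure_mono hAIcc
      _ = ENNReal.ofReal (2*a) := by rw [Real.volume_Icc]; ring_nf
  have volB : volume B ≤ ENNReal.ofReal (2*b) := by
    calc volume B ≤ volume (Icc (-b) b) := measure_mono hBIcc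
      _ = ENNReal.ofReal (2*b) := by rw [Real.volume_Icc]; ring_nf
  -- sections
  set S : ℝ → Set ℝ := fun x => {y : ℝ | (x, y) ∈ K} with hS
  have hSconv : ∀ x, Convex ℝ (S x) := by
    intro x y₁ hy₁ y₂ hy₂ s t hs ht hst
    have h2 := hKconv hy₁ hy₂ hs ht hst
    have heq : s • ((x, y₁) : ℝ × ℝ) + t • (x, y₂) = (x, s*y₁ + t*y₂) := by
      have hxx : s*x + t*x = x := by rw [← add_mul, hst, one_mul]
      simp [Prod.ext_iff, smul_eq_mul, hxx]
    rw [heq] at h2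
    simpa [S, smul_eq_mul] using h2
  have key : ∀ p ∈ K, ∀ t : ℝ, t ∈ Icc (0:ℝ) 1 →
      ENNReal.ofReal (2*b*(1-t)) ≤ volume (S (t * p.1)) := by
    intro p hp t ht
    have h1 : t * p.2 + (1-t)*b ∈ S (t * p.1) := by
      have h := hKconv (a := t) (b := 1-t) hp hbK ht.1 (by linarith [ht.2]) (by ring)
      have heq : t • p + (1-t) • (((0:ℝ), b) : ℝ × ℝ) = (t*p.1, t*p.2 + (1-t)*b) := by
        simp [Prod.ext_iff, smul_eq_mul]
      rw [heq] at h
      exact h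
    have h2 : t * p.2 - (1-t)*b ∈ S (t * p.1) := by
      have h := hKconv (a := t) (b := 1-t) hp hbK' ht.1 (by linarith [ht.2]) (by ring)
      have heq : t • p + (1-t) • (((0:ℝ), -b) : ℝ × ℝ) = (t*p.1, t*p.2 - (1-t)*b) := by
        simp [Prod.ext_iff, smul_eq_mul]
        ring
      rw [heq] at h
      exact h
    have hIcc : Icc (t*p.2 - (1-t)*b) (t*p.2 + (1-t)*b) ⊆ S (t * p.1) :=
      (hSconv _).ordConnected.out h2 h1
    calc ENNReal.ofReal (2*b*(1-t))
        = volume (Icc (t*p.2 - (1-t)*b) (t*p.2 + (1-t)*b)) := by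
          rw [Real.volume_Icc]; ring_nf
      _ ≤ volume (S (t * p.1)) := measure_mono hIcc
  have sect : ∀ x ∈ Icc (-a) a, ENNReal.ofReal (2*b*(1 - |x|/a)) ≤ volume (S x) := by
    intro x hx
    have habs : |x| ≤ a := abs_le.mpr ⟨hx.1, hx.2⟩
    have ht : |x|/a ∈ Icc (0:ℝ) 1 :=
      ⟨div_nonneg (abs_nonneg x) ha_pos.le, (div_le_one ha_pos).mpr habs⟩
    rcases le_or_gt 0 x with hx0 | hx0
    · have h := key p₀ hp₀K (|x|/a) ht
      have he : |x|/a * p₀.1 = x := by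
        rw [hp₀1, abs_of_nonneg hx0]
        field_simp
      rwa [he] at h
    · have h := key (-p₀) (hneg _ hp₀K) (|x|/a) ht
      have he : |x|/a * (-p₀).1 = x := by
        rw [abs_of_neg hx0]
        simp only [Prod.fst_neg, hp₀1]
        field_simp
      rwa [he] at h
  -- Fubini
  have hKm : MeasurableSet K := hKc.isClosed.measurableSet
  have volK : volume K = ∫⁻ x, volume (S x) := by
    rw [MeasureTheory.Measure.volume_eq_prod, Measure.prod_apply hKm]
    rfl
  have hmeas : Measurable fun x => volume (S x) := measurable_measure_prodMk_left hKm
  -- integral computation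
  have habsint : ∫ x in (-a)..a, |x| = a^2 := by
    have i1 : ∫ x in (-a)..(0:ℝ), |x| = a^2/2 := by
      rw [intervalIntegral.integral_congr (g := fun x => -x)
        (fun x hx => abs_of_nonpos (by
          rcases Set.mem_uIcc.mp hx with h | h
          · exact h.2
          · linarith [h.1, h.2, ha_pos]))]
      rw [intervalIntegral.integral_neg, integral_id]
      ring
    have i2 : ∫ x in (0:ℝ)..a, |x| = a^2/2 := by
      rw [intervalIntegral.integral_congr (g := fun x => x)
        (fun x hx => abs_of_nonneg (by
          rcases Set.mem_uIcc.mp hx with h | h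
          · exact h.1
          · linarith [h.1, h.2, ha_pos]))]
      rw [integral_id]; ring
    rw [← intervalIntegral.integral_add_adjacent_intervals
      (continuous_abs.intervalIntegrable (-a) 0) (continuous_abs.intervalIntegrable 0 a),
      i1, i2]
    ring
  have hfc : Continuous fun x : ℝ => 2*b*(1 - |x|/a) := by fun_prop
  have hreal : ∫ x in Icc (-a) a, 2*b*(1 - |x|/a) = 2*a*b := by
    rw [MeasureTheory.integral_Icc_eq_integral_Ioc,
      ← intervalIntegral.integral_of_le (by linarith : -a ≤ a)]
    have hfun : (fun x : ℝ => 2*b*(1 - |x|/a)) = fun x : ℝ => 2*b + (-(2*b/a)) * |x| := by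
      funext x; field_simp; ring
    rw [hfun, intervalIntegral.integral_add (intervalIntegrable_const)
      ((continuous_abs.intervalIntegrable _ _).const_mul _),
      intervalIntegral.integral_const, intervalIntegral.integral_const_mul, habsint]
    simp only [smul_eq_mul]
    field_simp
    ring
  have hlint : ∫⁻ x in Icc (-a) a, ENNReal.ofReal (2*b*(1 - |x|/a)) = ENNReal.ofReal (2*a*b) := by
    rw [← MeasureTheory.ofReal_integral_eq_lintegral_ofReal
      (hfc.integrableOn_Icc) ?_, hreal]
    · refine Filter.eventually_of_mem (self_mem_ae_restrict measurableSet_Icc)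
        (fun x hx => ?_)
      have habs : |x| ≤ a := abs_le.mpr ⟨hx.1, hx.2⟩
      have h1 : |x|/a ≤ 1 := (div_le_one ha_pos).mpr habs
      show (0:ℝ → ℝ) x ≤ 2*b*(1 - |x|/a)
      simp only [Pi.zero_apply]
      exact mul_nonneg (by linarith [hb_pos] : (0:ℝ) ≤ 2*b) (by linarith : (0:ℝ) ≤ 1 - |x|/a)
  have step : ENNReal.ofReal (2*a*b) ≤ volume K := by
    calc ENNReal.ofReal (2*a*b)
        = ∫⁻ x in Icc (-a) a, ENNReal.ofReal (2*b*(1 - |x|/a)) := hlint.symm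
      _ ≤ ∫⁻ x in Icc (-a) a, volume (S x) := setLIntegral_mono hmeas sect
      _ ≤ ∫⁻ x, volume (S x) := setLIntegral_le_lintegral _ _
      _ = volume K := volK.symm
  calc volume A * volume B ≤ ENNReal.ofReal (2*a) * ENNReal.ofReal (2*b) :=
        mul_le_mul' volA volB
    _ = ENNReal.ofReal (2 * (2*a*b)) := by
        rw [← ENNReal.ofReal_mul (by positivity)]; ring_nf
    _ = 2 * ENNReal.ofReal (2*a*b) := by
        rw [ENNReal.ofReal_mul (by norm_num : (0:ℝ) ≤ 2), ENNReal.ofReal_ofNat]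
    _ ≤ 2 * volume K := mul_le_mul_right step 2
end

section
/- There exists an orthogonal transformation O' ∈ O(n) (n even) such that O' maps the cross-polytope B₁^n(√n) = {p ∈ ℝ^n : Σ|p_i| ≤ √n} into the cube [−√2, √2]^n. Equivalently, O'(B₁^n(√(n/2))) ⊆ [−1,1]^n. -/
open Complex Finset Real

lemma key {m : ℕ} (j j' : Fin m) :
    ∑ k : Fin m, Complex.exp (2 * Real.pi * I * (((j:ℕ):ℂ) - ((j':ℕ):ℂ)) * k / m)
      = if j = j' then (m:ℂ) else 0 := by
  have hm : 0 < m := j.pos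
  have hm' : (m:ℂ) ≠ 0 := Nat.cast_ne_zero.mpr hm.ne'
  set d : ℂ := ((j:ℕ):ℂ) - ((j':ℕ):ℂ) with hd
  set ζ : ℂ := Complex.exp (2 * Real.pi * I * d / m) with hζ
  have hpow : ∀ k : Fin m, Complex.exp (2 * Real.pi * I * d * k / m) = ζ ^ (k:ℕ) := by
    intro k
    rw [hζ, ← Complex.exp_nat_mul]
    ring_nf
  rw [Finset.sum_congr rfl (fun k _ => hpow k), Fin.sum_univ_eq_sum_range]
  by_cases h : j = j'
  · subst h
    simp [hζ, hd]
  · rw [if_neg h]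
    have hζm : ζ ^ m = 1 := by
      rw [hζ, ← Complex.exp_nat_mul]
      have : (m:ℂ) * (2 * Real.pi * I * d / m) = (((((j:ℕ):ℤ) - ((j':ℕ):ℤ)) : ℤ) : ℂ) * (2 * Real.pi * I) := by
        push_cast [hd]; field_simp
      rw [this]
      exact Complex.exp_int_mul_two_pi_mul_I _
    have hζ1 : ζ ≠ 1 := by
      intro h1
      rw [hζ, Complex.exp_eq_one_iff] at h1
      obtain ⟨t, ht⟩ := h1
      have hπ : (Real.pi : ℂ) ≠ 0 := Complex.ofReal_ne_zero.mpr Real.pi_ne_zero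
      have hI : I ≠ 0 := I_ne_zero
      have hdt : d = t * m := by
        field_simp at ht
        have h2 : (2:ℂ) * Real.pi * I * d = (2 * Real.pi * I) * (t * m) := by linear_combination (2 * Real.pi * I) * ht
        exact mul_left_cancel₀ (show (2:ℂ) * Real.pi * I ≠ 0 by simp [hπ, hI]) h2
      have hdt' : ((j:ℕ):ℤ) - ((j':ℕ):ℤ) = t * m := by
        have : (((j:ℕ):ℤ) - ((j':ℕ):ℤ) : ℂ) = ((t * m : ℤ) : ℂ) := by push_cast [← hd]; push_cast at hdt ⊢; linear_combination hdt
        exact_mod_cast this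
      have h1 : ((j:ℕ):ℤ) < m := by exact_mod_cast j.isLt
      have h2 : ((j':ℕ):ℤ) < m := by exact_mod_cast j'.isLt
      have h3 : ((j:ℕ):ℤ) ≠ ((j':ℕ):ℤ) := by
        simpa [Fin.ext_iff] using h
      have h4 : (0:ℤ) ≤ j := Int.ofNat_nonneg _
      have h5 : (0:ℤ) ≤ j' := Int.ofNat_nonneg _
      rcases lt_trichotomy t 0 with ht0 | ht0 | ht0
      · nlinarith [mul_le_mul_of_nonneg_right (show t ≤ -1 by omega) (show (0:ℤ) ≤ m by positivity)]
      · subst ht0; simp at hdt'; omega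
      · nlinarith [mul_le_mul_of_nonneg_right (show 1 ≤ t by omega) (show (0:ℤ) ≤ m by positivity)]
    rw [geom_sum_eq hζ1, hζm]
    simp

lemma parseval {m : ℕ} (z : Fin m → ℂ) :
    ∑ k : Fin m, Complex.normSq (∑ j : Fin m, Complex.exp (2 * Real.pi * I * j * k / m) * z j)
      = m * ∑ j : Fin m, Complex.normSq (z j) := by
  set E : Fin m → Fin m → ℂ := fun j k => Complex.exp (2 * Real.pi * I * j * k / m) with hE
  have hmul : ∀ (j j' k : Fin m), E j k * (starRingEnd ℂ) (E j' k)
      = Complex.exp (2 * Real.pi * I * (((j:ℕ):ℂ) - ((j':ℕ):ℂ)) * k / m) := by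
    intro j j' k
    rw [hE]
    simp only
    rw [← Complex.exp_conj, ← Complex.exp_add]
    congr 1
    simp only [map_div₀, map_mul, Complex.conj_I, Complex.conj_ofReal, Complex.conj_natCast,
      map_ofNat]
    ring
  have main : (↑(∑ k : Fin m, Complex.normSq (∑ j, E j k * z j)) : ℂ)
      = ↑((m:ℝ) * ∑ j, Complex.normSq (z j)) := by
    push_cast
    calc ∑ k : Fin m, (Complex.normSq (∑ j, E j k * z j) : ℂ)
        = ∑ k : Fin m, (∑ j, E j k * z j) * (starRingEnd ℂ) (∑ j', E j' k * z j') := by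
          exact Finset.sum_congr rfl fun k _ => (Complex.mul_conj _).symm
      _ = ∑ k : Fin m, ∑ j, ∑ j', (E j k * (starRingEnd ℂ) (E j' k)) * (z j * (starRingEnd ℂ) (z j')) := by
          refine Finset.sum_congr rfl fun k _ => ?_
          rw [map_sum, Finset.sum_mul_sum]
          refine Finset.sum_congr rfl fun j _ => Finset.sum_congr rfl fun j' _ => ?_
          rw [map_mul]; ring
      _ = ∑ j, ∑ j', (z j * (starRingEnd ℂ) (z j')) * ∑ k : Fin m, Complex.exp (2 * Real.pi * I * (((j:ℕ):ℂ) - ((j':ℕ):ℂ)) * ((k:ℕ):ℂ) / m) := by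
          rw [Finset.sum_comm]
          refine Finset.sum_congr rfl fun j _ => ?_
          rw [Finset.sum_comm]
          refine Finset.sum_congr rfl fun j' _ => ?_
          rw [Finset.mul_sum]
          exact Finset.sum_congr rfl fun k _ => by rw [hmul]; ring
      _ = ∑ j, (z j * (starRingEnd ℂ) (z j)) * m := by
          refine Finset.sum_congr rfl fun j _ => ?_
          simp only [key, mul_ite, mul_zero, Finset.sum_ite_eq, Finset.mem_univ, if_true]
      _ = (m:ℂ) * ∑ j, (Complex.normSq (z j) : ℂ) := by
          simp only [Complex.mul_conj]
          rw [← Finset.sum_mul, mul_comm]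
  exact Complex.ofReal_inj.mp main

noncomputable def Wc (m : ℕ) (p : EuclideanSpace ℝ (Fin m × Fin 2)) (k : Fin m) : ℂ :=
  ∑ j : Fin m, Complex.exp (2 * Real.pi * I * j * k / m) * ((p (j, 0) : ℂ) + (p (j, 1) : ℂ) * I)

lemma Wc_add (m : ℕ) (p q : EuclideanSpace ℝ (Fin m × Fin 2)) (k : Fin m) :
    Wc m (p + q) k = Wc m p k + Wc m q k := by
  unfold Wc
  rw [← Finset.sum_add_distrib]
  refine Finset.sum_congr rfl fun j _ => ?_
  have h0 : (p + q) (j, (0 : Fin 2)) = p (j, 0) + q (j, 0) := rfl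
  have h1 : (p + q) (j, (1 : Fin 2)) = p (j, 1) + q (j, 1) := rfl
  rw [h0, h1]; push_cast; ring

lemma Wc_smul (m : ℕ) (c : ℝ) (p : EuclideanSpace ℝ (Fin m × Fin 2)) (k : Fin m) :
    Wc m (c • p) k = (c : ℂ) * Wc m p k := by
  unfold Wc
  rw [Finset.mul_sum]
  refine Finset.sum_congr rfl fun j _ => ?_
  have h0 : (c • p) (j, (0 : Fin 2)) = c * p (j, 0) := rfl
  have h1 : (c • p) (j, (1 : Fin 2)) = c * p (j, 1) := rfl
  rw [h0, h1]; push_cast; ring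

noncomputable def T (m : ℕ) :
    EuclideanSpace ℝ (Fin m × Fin 2) →ₗ[ℝ] EuclideanSpace ℝ (Fin m × Fin 2) where
  toFun p := WithLp.toLp 2 (fun q : Fin m × Fin 2 => (Real.sqrt m)⁻¹ * (if q.2 = 0 then (Wc m p q.1).re else (Wc m p q.1).im))
  map_add' p q := WithLp.ofLp_injective 2 (funext fun i => by
    show (Real.sqrt m)⁻¹ * _ = (Real.sqrt m)⁻¹ * _ + (Real.sqrt m)⁻¹ * _
    rw [Wc_add]
    by_cases h : i.2 = 0 <;> simp [h, mul_add])
  map_smul' c p := WithLp.ofLp_injective 2 (funext fun i => by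
    show (Real.sqrt m)⁻¹ * _ = c * ((Real.sqrt m)⁻¹ * _)
    rw [Wc_smul]
    by_cases h : i.2 = 0 <;> simp [h, Complex.re_ofReal_mul, Complex.im_ofReal_mul] <;> ring)

lemma T_norm (m : ℕ) (p : EuclideanSpace ℝ (Fin m × Fin 2)) : ‖T m p‖ = ‖p‖ := by
  rw [EuclideanSpace.norm_eq, EuclideanSpace.norm_eq]
  congr 1
  have happ : ∀ q : Fin m × Fin 2, (T m p) q
      = (Real.sqrt m)⁻¹ * (if q.2 = 0 then (Wc m p q.1).re else (Wc m p q.1).im) := fun _ => rfl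
  calc ∑ q : Fin m × Fin 2, ‖(T m p) q‖ ^ 2
      = ∑ k : Fin m, ((Real.sqrt m)⁻¹)^2 * Complex.normSq (Wc m p k) := by
        rw [Fintype.sum_prod_type]
        refine Finset.sum_congr rfl fun k _ => ?_
        rw [Fin.sum_univ_two, happ, happ]
        simp only [Real.norm_eq_abs, sq_abs]
        simp [Complex.normSq_apply, mul_pow]
        ring
    _ = ((Real.sqrt m)⁻¹)^2 * (m * ∑ j : Fin m, Complex.normSq ((p (j,0) : ℂ) + (p (j,1) : ℂ) * I)) := by
        rw [← Finset.mul_sum]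
        congr 1
        exact parseval _
    _ = ∑ q : Fin m × Fin 2, ‖p q‖ ^ 2 := by
        rcases Nat.eq_zero_or_pos m with hm | hm
        · subst hm
          simp
        · have h1 : ((Real.sqrt m)⁻¹)^2 * (m : ℝ) = 1 := by
            rw [inv_pow, Real.sq_sqrt (by positivity)]
            exact inv_mul_cancel₀ (by exact_mod_cast hm.ne')
          rw [← mul_assoc, h1, one_mul, Fintype.sum_prod_type]
          refine Finset.sum_congr rfl fun j _ => ?_
          rw [Fin.sum_univ_two, Complex.normSq_add_mul_I]
          simp [_root_.sq_abs]

lemma T_bound (m : ℕ) (p : EuclideanSpace ℝ (Fin m × Fin 2)) (q : Fin m × Fin 2)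
    (h : ∑ i, |p i| ≤ Real.sqrt 2 * Real.sqrt m) : |T m p q| ≤ Real.sqrt 2 := by
  have hm : 0 < m := q.1.pos
  have happ : (T m p) q
      = (Real.sqrt m)⁻¹ * (if q.2 = 0 then (Wc m p q.1).re else (Wc m p q.1).im) := rfl
  have hW : ‖Wc m p q.1‖ ≤ Real.sqrt 2 * Real.sqrt m := by
    unfold Wc
    refine le_trans (norm_sum_le _ _) ?_
    have hterm : ∀ j : Fin m, ‖(Complex.exp (2 * Real.pi * I * j * q.1 / m)
        * ((p (j, 0) : ℂ) + (p (j, 1) : ℂ) * I))‖ ≤ |p (j, 0)| + |p (j, 1)| := by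
      intro j
      rw [norm_mul]
      have he : ‖Complex.exp (2 * Real.pi * I * j * q.1 / m)‖ = 1 := by
        have harg : 2 * (Real.pi:ℂ) * I * j * q.1 / m = ((2 * Real.pi * j * q.1 / m : ℝ) : ℂ) * I := by
          push_cast; ring
        rw [harg, Complex.norm_exp_ofReal_mul_I]
      rw [he, one_mul]
      refine le_trans (norm_add_le _ _) ?_
      simp [Complex.norm_real]
    refine le_trans (Finset.sum_le_sum fun j _ => hterm j) ?_
    calc ∑ j : Fin m, (|p (j, 0)| + |p (j, 1)|) = ∑ i, |p i| := by
          rw [Fintype.sum_prod_type]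
          simp [Fin.sum_univ_two]
      _ ≤ Real.sqrt 2 * Real.sqrt m := h
  have hcomp : |if q.2 = 0 then (Wc m p q.1).re else (Wc m p q.1).im| ≤ ‖Wc m p q.1‖ := by
    by_cases hq : q.2 = 0 <;> simp [hq, Complex.abs_re_le_norm, Complex.abs_im_le_norm]
  rw [happ, abs_mul, abs_inv, _root_.abs_of_nonneg (Real.sqrt_nonneg _)]
  have hsm : (0:ℝ) < Real.sqrt m := Real.sqrt_pos.mpr (by exact_mod_cast hm)
  calc (Real.sqrt m)⁻¹ * |if q.2 = 0 then (Wc m p q.1).re else (Wc m p q.1).im|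
      ≤ (Real.sqrt m)⁻¹ * (Real.sqrt 2 * Real.sqrt m) := by
        exact mul_le_mul_of_nonneg_left (le_trans hcomp hW) (by positivity)
    _ = Real.sqrt 2 := by field_simp

theorem stmt12 {n : ℕ} (heven : Even n) :
    ∃ O' : EuclideanSpace ℝ (Fin n) ≃ₗᵢ[ℝ] EuclideanSpace ℝ (Fin n),
      O' '' {p : EuclideanSpace ℝ (Fin n) | (∑ i, |p i|) ≤ Real.sqrt n} ⊆
        {x : EuclideanSpace ℝ (Fin n) | ∀ i, |x i| ≤ Real.sqrt 2} := by
  obtain ⟨m, hm⟩ := heven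
  have hn : m * 2 = n := by omega
  let κ : Fin m × Fin 2 ≃ Fin n := finProdFinEquiv.trans (finCongr hn)
  let B := LinearIsometryEquiv.piLpCongrLeft 2 ℝ ℝ κ
  let G : EuclideanSpace ℝ (Fin m × Fin 2) ≃ₗᵢ[ℝ] EuclideanSpace ℝ (Fin m × Fin 2) :=
    LinearIsometry.toLinearIsometryEquiv ⟨T m, T_norm m⟩ rfl
  refine ⟨(B.symm.trans G).trans B, ?_⟩
  rintro x ⟨p, hp, rfl⟩ i
  simp only [Set.mem_setOf_eq] at hp
  have hBi : ((B.symm.trans G).trans B) p i = (G (B.symm p)) (κ.symm i) := by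
    simp only [LinearIsometryEquiv.trans_apply]
    rfl
  rw [hBi]
  have hG : (G (B.symm p)) (κ.symm i) = (T m (B.symm p)) (κ.symm i) := by
    rw [show G (B.symm p) = T m (B.symm p) from
      LinearIsometry.toLinearIsometryEquiv_apply _ _ _]
  rw [hG]
  apply T_bound
  have hsum : ∑ q, |(B.symm p) q| = ∑ i, |p i| := by
    have hB : ∀ q, (B.symm p) q = p (κ q) := by
      intro q
      show ((LinearIsometryEquiv.piLpCongrLeft 2 ℝ ℝ κ).symm p) q = _
      rw [LinearIsometryEquiv.piLpCongrLeft_symm]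
      rfl
    rw [Finset.sum_congr rfl fun q _ => by rw [hB]]
    exact Equiv.sum_comp κ (fun i => |p i|)
  rw [hsum]
  refine le_trans hp ?_
  have : (n : ℝ) = 2 * m := by push_cast [← hn]; ring
  rw [this, Real.sqrt_mul (by norm_num)]
end

section
/- Let K ⊂ ℝ^{2n} be a compact convex body with 0 ∈ int(K) and smooth gauge g_K, and let γ : [0,T] → ∂K solve γ'(t) = J∇g_K(γ(t)) with γ(0) = γ(T). Suppose t₀ ∈ [0,T] satisfies g_K(γ(t₀) − γ(0)) ≥ 1. Then t₀ ≥ 1/‖J‖_{K°→K}, where ‖J‖_{K°→K} = sup{g_K(Jw) : g_{K°}(w) ≤ 1}. -/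
open scoped RealInnerProductSpace

section Aux

variable {E : Type*} [NormedAddCommGroup E] [InnerProductSpace ℝ E] [CompleteSpace E]

lemma inner_gradient_eq (f : E → ℝ) (x v : E) : ⟪gradient f x, v⟫ = fderiv ℝ f x v := by
  rw [gradient, ← InnerProductSpace.toDual_apply_apply, LinearIsometryEquiv.apply_symm_apply]

/-- subgradient inequality for the gauge of a convex absorbent set. -/
lemma fderiv_gauge_le (K : Set E) (hKconv : Convex ℝ K) (habs : Absorbent ℝ K)
    (x : E) (hd : DifferentiableAt ℝ (gauge K) x) (z : E) :
    fderiv ℝ (gauge K) x (z - x) ≤ gauge K z - gauge K x := by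
  set g := gauge K with hg
  have h1 : HasDerivAt (fun s : ℝ => x + s • (z - x)) (z - x) 0 := by
    simpa using ((hasDerivAt_id (0 : ℝ)).smul_const (z - x)).const_add x
  have hψ : HasDerivAt (fun s : ℝ => g (x + s • (z - x))) (fderiv ℝ g x (z - x)) 0 := by
    have hfd : HasFDerivAt g (fderiv ℝ g x) ((fun s : ℝ => x + s • (z - x)) 0) := by
      simpa using hd.hasFDerivAt
    have := hfd.comp_hasDerivAt 0 h1
    simpa [Function.comp_def] using this
  rw [hasDerivAt_iff_tendsto_slope] at hψ
  have hψ' : Filter.Tendsto (slope (fun s : ℝ => g (x + s • (z - x))) 0)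
      (nhdsWithin 0 (Set.Ioi 0)) (nhds (fderiv ℝ g x (z - x))) :=
    hψ.mono_left (nhdsWithin_mono 0 (fun s hs => ne_of_gt hs))
  refine le_of_tendsto hψ' ?_
  filter_upwards [Ioc_mem_nhdsGT_of_mem (Set.mem_Ico.2 ⟨le_rfl, zero_lt_one⟩)] with s hs
  have hs0 : (0 : ℝ) < s := hs.1
  have hxz : x + s • (z - x) = (1 - s) • x + s • z := by module
  have hconv : g (x + s • (z - x)) ≤ (1 - s) * g x + s * g z := by
    rw [hxz]
    calc gauge K ((1 - s) • x + s • z) ≤ gauge K ((1 - s) • x) + gauge K (s • z) :=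
          gauge_add_le hKconv habs _ _
      _ = (1 - s) * gauge K x + s * gauge K z := by
          rw [gauge_smul_of_nonneg (by linarith [hs.2] : (0:ℝ) ≤ 1 - s),
            gauge_smul_of_nonneg hs0.le]; simp
  have hsl : slope (fun s : ℝ => g (x + s • (z - x))) 0 s
      = (g (x + s • (z - x)) - g x) / s := by
    rw [slope_def_field]
    simp
  rw [hsl, div_le_iff₀ hs0]
  nlinarith [hconv, hs.2]

/-- the gradient of the gauge at a nonzero point lies in the polar set. -/
lemma gradient_gauge_mem_polar (K : Set E) (hKconv : Convex ℝ K) (habs : Absorbent ℝ K)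
    (x : E) (hx0 : x ≠ 0) (hd : DifferentiableAt ℝ (gauge K) x) :
    gradient (gauge K) x ∈ polarSet K := by
  intro z hz
  have key := fderiv_gauge_le K hKconv habs x hd
  have h2 : fderiv ℝ (gauge K) x x ≤ gauge K x := by
    have h := key ((2 : ℝ) • x)
    have hxx : (2 : ℝ) • x - x = x := by module
    rw [hxx, gauge_smul_of_nonneg (by norm_num : (0:ℝ) ≤ 2), smul_eq_mul] at h
    linarith
  have h0' : gauge K x ≤ fderiv ℝ (gauge K) x x := by
    have := key 0
    rw [gauge_zero] at this
    have : fderiv ℝ (gauge K) x (0 - x) ≤ 0 - gauge K x := this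
    rw [zero_sub, map_neg] at this
    linarith
  have heuler : fderiv ℝ (gauge K) x x = gauge K x := le_antisymm h2 h0'
  have hzle : fderiv ℝ (gauge K) x z ≤ gauge K z := by
    have := key z
    have hmaps : fderiv ℝ (gauge K) x (z - x) =
        fderiv ℝ (gauge K) x z - fderiv ℝ (gauge K) x x := map_sub _ _ _
    rw [hmaps, heuler] at this
    linarith
  have hz1 : gauge K z ≤ 1 := gauge_le_one_of_mem hz
  calc ⟪z, gradient (gauge K) x⟫ = ⟪gradient (gauge K) x, z⟫ := real_inner_comm _ _
    _ = fderiv ℝ (gauge K) x z := inner_gradient_eq _ _ _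
    _ ≤ gauge K z := hzle
    _ ≤ 1 := hz1

/-- membership in the polar set gives a linear lower bound on the gauge. -/
lemma inner_le_gauge (K : Set E) (hKconv : Convex ℝ K) (h0K : (0 : E) ∈ K)
    (habs : Absorbent ℝ K) {y : E} (hy : y ∈ polarSet K) (v : E) :
    ⟪v, y⟫ ≤ gauge K v := by
  refine le_of_forall_pos_le_add fun ε hε => ?_
  have ha : 0 < gauge K v + ε := by have := gauge_nonneg (s := K) v; linarith
  have hmem : (gauge K v + ε)⁻¹ • v ∈ K := by
    apply gauge_lt_one_subset_self hKconv h0K habs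
    have : gauge K ((gauge K v + ε)⁻¹ • v) = (gauge K v + ε)⁻¹ * gauge K v := by
      rw [gauge_smul_of_nonneg (inv_nonneg.2 ha.le)]; simp
    rw [Set.mem_setOf_eq, this, inv_mul_lt_iff₀ ha, mul_one]
    linarith
  have := hy _ hmem
  rw [real_inner_smul_left, inv_mul_le_iff₀ ha, mul_one] at this
  linarith

end Aux

lemma norm_Jsc (n : ℕ) (x : EuclideanSpace ℝ (Fin n ⊕ Fin n)) : ‖Jsc n x‖ = ‖x‖ := by
  rw [EuclideanSpace.norm_eq, EuclideanSpace.norm_eq]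
  congr 1
  rw [Fintype.sum_sum_type, Fintype.sum_sum_type]
  simp [Jsc, add_comm]

lemma Jsc_zero (n : ℕ) : Jsc n 0 = 0 := by
  ext i; cases i <;> simp [Jsc] <;> rfl

theorem stmt15 {n : ℕ} (K : Set (EuclideanSpace ℝ (Fin n ⊕ Fin n)))
    (hKc : IsCompact K) (hKconv : Convex ℝ K) (h0 : 0 ∈ interior K)
    (hsmooth : ∀ x : EuclideanSpace ℝ (Fin n ⊕ Fin n), x ≠ 0 → DifferentiableAt ℝ (gauge K) x)
    (T : ℝ) (hT : 0 < T) (γ : ℝ → EuclideanSpace ℝ (Fin n ⊕ Fin n))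
    (hmem : ∀ t ∈ Set.Icc (0:ℝ) T, γ t ∈ frontier K)
    (hode : ∀ t ∈ Set.Icc (0:ℝ) T, HasDerivAt γ (Jsc n (gradient (gauge K) (γ t))) t)
    (hclosed : γ 0 = γ T)
    (t₀ : ℝ) (ht₀ : t₀ ∈ Set.Icc (0:ℝ) T) (hge : 1 ≤ gauge K (γ t₀ - γ 0)) :
    1 / sSup {r : ℝ | ∃ w, gauge (polarSet K) w ≤ 1 ∧ r = gauge K (Jsc n w)} ≤ t₀ := by
  classical
  have h0K : (0 : EuclideanSpace ℝ (Fin n ⊕ Fin n)) ∈ K := interior_subset h0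
  have habs : Absorbent ℝ K := absorbent_nhds_zero (mem_interior_iff_mem_nhds.mp h0)
  set S := {r : ℝ | ∃ w, gauge (polarSet K) w ≤ 1 ∧ r = gauge K (Jsc n w)} with hS
  -- a small ball inside K
  obtain ⟨δ, hδ, hball⟩ := Metric.mem_nhds_iff.mp (mem_interior_iff_mem_nhds.mp h0)
  -- polar set is contained in a ball
  have hpolar_sub : polarSet K ⊆ Metric.closedBall 0 (2 / δ) := by
    intro y hy
    rcases eq_or_ne y 0 with rfl | hy0
    · simp; positivity
    · have hxK : (δ / 2 / ‖y‖) • y ∈ K := by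
        apply hball
        rw [Metric.mem_ball, dist_zero_right, norm_smul, Real.norm_eq_abs,
          abs_of_nonneg (by positivity), div_mul_cancel₀ _ (norm_ne_zero_iff.2 hy0)]
        linarith
      have := hy _ hxK
      rw [real_inner_smul_left, real_inner_self_eq_norm_sq] at this
      rw [Metric.mem_closedBall, dist_zero_right]
      have hny : 0 < ‖y‖ := norm_pos_iff.2 hy0
      rw [div_mul_eq_mul_div, div_le_one hny, pow_two] at this
      · rw [le_div_iff₀ hδ]
        nlinarith
  -- polar set is absorbent
  have hR : ∃ R : ℝ, 0 < R ∧ K ⊆ Metric.closedBall 0 R := by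
    obtain ⟨R, hR⟩ := hKc.isBounded.subset_closedBall 0
    exact ⟨max R 1, lt_of_lt_of_le one_pos (le_max_right _ _),
      hR.trans (Metric.closedBall_subset_closedBall (le_max_left _ _))⟩
  obtain ⟨R, hRpos, hKR⟩ := hR
  have hpolar_abs : Absorbent ℝ (polarSet K) := by
    apply absorbent_nhds_zero
    apply Filter.mem_of_superset (Metric.ball_mem_nhds 0 (by positivity : (0:ℝ) < R⁻¹))
    intro y hy x hx
    have h1 : ‖x‖ ≤ R := by simpa [dist_zero_right] using hKR hx
    have h2 : ‖y‖ < R⁻¹ := by simpa [dist_zero_right] using hy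
    calc ⟪x, y⟫ ≤ ‖x‖ * ‖y‖ := real_inner_le_norm x y
      _ ≤ R * R⁻¹ := by
          apply mul_le_mul h1 h2.le (norm_nonneg _) hRpos.le
      _ = 1 := mul_inv_cancel₀ hRpos.ne'
  -- bound for elements of S
  have hSbound : ∀ r ∈ S, r ≤ 2 / δ / δ := by
    rintro r ⟨w, hw, rfl⟩
    have hnw : ‖w‖ ≤ 2 / δ := by
      have h1 : gauge (Metric.closedBall (0:EuclideanSpace ℝ (Fin n ⊕ Fin n)) (2/δ)) w ≤ gauge (polarSet K) w :=
        gauge_mono hpolar_abs hpolar_sub w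
      rw [gauge_closedBall (by positivity)] at h1
      have := h1.trans hw
      rwa [div_le_one (by positivity)] at this
    have h2 : gauge K (Jsc n w) ≤ gauge (Metric.ball (0:EuclideanSpace ℝ (Fin n ⊕ Fin n)) δ) (Jsc n w) :=
      gauge_mono (absorbent_ball_zero hδ) hball _
    rw [gauge_ball hδ.le, norm_Jsc] at h2
    calc gauge K (Jsc n w) ≤ ‖w‖ / δ := h2
      _ ≤ 2 / δ / δ := by gcongr
  have hSbdd : BddAbove S := ⟨2 / δ / δ, fun r hr => hSbound r hr⟩
  have hS0 : (0 : ℝ) ∈ S := ⟨0, by simp [gauge_zero], by simp [Jsc_zero, gauge_zero]⟩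
  set M := sSup S with hM
  have hMnonneg : 0 ≤ M := le_csSup hSbdd hS0
  rcases eq_or_lt_of_le hMnonneg with hM0 | hMpos
  · rw [← hM0]; simpa using ht₀.1
  -- construct the dual vector y
  set v := γ t₀ - γ 0 with hv
  have hvint : v ∉ interior K := by
    intro h
    have := interior_subset_gauge_lt_one K h
    rw [Set.mem_setOf_eq] at this
    linarith
  obtain ⟨f, hf⟩ := geometric_hahn_banach_open_point hKconv.interior isOpen_interior hvint
  have hfv : 0 < f v := by simpa using hf 0 h0
  have hfK : ∀ x ∈ K, f x ≤ f v := by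
    intro x hx
    have key : ∀ θ : ℝ, θ ∈ Set.Ioo (0:ℝ) 1 → θ * f x < f v := by
      intro θ hθ
      have hseg : θ • x ∈ interior K := by
        apply hKconv.openSegment_interior_self_subset_interior h0 hx
        exact ⟨1 - θ, θ, by linarith [hθ.2], hθ.1, by linarith, by simp⟩
      have := hf _ hseg
      simpa [map_smul] using this
    have htend : Filter.Tendsto (fun θ : ℝ => θ * f x) (nhdsWithin 1 (Set.Iio 1))
        (nhds (f x)) := by
      have : Filter.Tendsto (fun θ : ℝ => θ * f x) (nhds 1) (nhds (1 * f x)) :=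
        (continuous_id.mul continuous_const).tendsto 1
      rw [one_mul] at this
      exact this.mono_left nhdsWithin_le_nhds
    refine le_of_tendsto htend ?_
    filter_upwards [Ioo_mem_nhdsLT_of_mem (Set.mem_Ioc.2 ⟨zero_lt_one, le_rfl⟩)] with θ hθ
    exact (key θ hθ).le
  set w0 := (InnerProductSpace.toDual ℝ (EuclideanSpace ℝ (Fin n ⊕ Fin n))).symm f with hw0
  set y := (f v)⁻¹ • w0 with hy
  have hinner : ∀ x : EuclideanSpace ℝ (Fin n ⊕ Fin n), ⟪x, y⟫ = (f v)⁻¹ * f x := by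
    intro x
    rw [hy, real_inner_smul_right, hw0]
    congr 1
    rw [real_inner_comm]
    exact InnerProductSpace.toDual_symm_apply
  have hypolar : y ∈ polarSet K := by
    intro x hx
    rw [hinner]
    rw [inv_mul_le_iff₀ hfv, mul_one]
    exact hfK x hx
  have hvy : ⟪v, y⟫ = 1 := by rw [hinner, inv_mul_cancel₀ hfv.ne']
  -- derivative bound
  have hbound : ∀ t ∈ Set.Icc (0:ℝ) T, ⟪Jsc n (gradient (gauge K) (γ t)), y⟫ ≤ M := by
    intro t ht
    have hfront := hmem t ht
    have hx0 : γ t ≠ 0 := by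
      intro h
      exact hfront.2 (h ▸ h0)
    have hgradpolar : gradient (gauge K) (γ t) ∈ polarSet K :=
      gradient_gauge_mem_polar K hKconv habs _ hx0 (hsmooth _ hx0)
    have h1 : ⟪Jsc n (gradient (gauge K) (γ t)), y⟫ ≤ gauge K (Jsc n (gradient (gauge K) (γ t))) :=
      inner_le_gauge K hKconv h0K habs hypolar _
    have h2 : gauge K (Jsc n (gradient (gauge K) (γ t))) ∈ S :=
      ⟨_, gauge_le_one_of_mem hgradpolar, rfl⟩
    exact h1.trans (le_csSup hSbdd h2)
  -- monotonicity argument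
  set ψ : ℝ → ℝ := fun t => M * t - ⟪γ t, y⟫ with hψdef
  have hψderiv : ∀ t ∈ Set.Icc (0:ℝ) T,
      HasDerivAt ψ (M - ⟪Jsc n (gradient (gauge K) (γ t)), y⟫) t := by
    intro t ht
    have h1 : HasDerivAt (fun s : ℝ => M * s) M t := by
      simpa using (hasDerivAt_id t).const_mul M
    have h2 : HasDerivAt (fun s : ℝ => ⟪γ s, y⟫) ⟪Jsc n (gradient (gauge K) (γ t)), y⟫ t := by
      have := ((innerSL ℝ).flip y).hasFDerivAt.comp_hasDerivAt t (hode t ht)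
      simpa only [Function.comp_def, ContinuousLinearMap.flip_apply, innerSL_apply_apply] using this
    exact h1.sub h2
  have ht₀T : Set.Icc (0:ℝ) t₀ ⊆ Set.Icc (0:ℝ) T :=
    Set.Icc_subset_Icc le_rfl ht₀.2
  have hmono : MonotoneOn ψ (Set.Icc 0 t₀) := by
    apply monotoneOn_of_deriv_nonneg (convex_Icc 0 t₀)
    · intro t ht
      exact ((hψderiv t (ht₀T ht)).continuousAt).continuousWithinAt
    · intro t ht
      rw [interior_Icc] at ht
      exact ((hψderiv t (ht₀T (Set.Ioo_subset_Icc_self ht))).differentiableAt).differentiableWithinAt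
    · intro t ht
      rw [interior_Icc] at ht
      have htT := ht₀T (Set.Ioo_subset_Icc_self ht)
      rw [(hψderiv t htT).deriv]
      linarith [hbound t htT]
  have hψle : ψ 0 ≤ ψ t₀ :=
    hmono (Set.left_mem_Icc.2 ht₀.1) (Set.right_mem_Icc.2 ht₀.1) ht₀.1
  have hkey : 1 ≤ M * t₀ := by
    have : ⟪γ t₀ - γ 0, y⟫ = ⟪γ t₀, y⟫ - ⟪γ 0, y⟫ := inner_sub_left _ _ _
    rw [hψdef] at hψle
    simp only at hψle
    have h1 : ⟪v, y⟫ ≤ M * t₀ := by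
      rw [hv, this]; linarith
    linarith [hvy ▸ h1]
  rw [div_le_iff₀ hMpos]
  linarith
end
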